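/- Let Y be a real-valued random variable with all absolute moments finite and fix a nonzero real λ. Then for every real number x and every integer n≥0, 𝓔_{n,λ}^Y(x) = Σ_{j=0}^{n} Σ_{k=0}^{j} C(n,j) 𝓔_{n−j,λ}^Y ⟨x⟩_{k,λ} (−1)^{j−k} S_{1,λ}^Y(j,k), where C(n,j) is the binomial coefficient. -/

import Mathlib

open MeasureTheory Finset

noncomputable section

/-- The degenerate falling factorial `(x)_{n,λ} = x(x-λ)⋯(x-(n-1)λ)`. -/
def dff (lam x : ℝ) (n : ℕ) : ℝ := ∏ i ∈ Finset.range n, (x - i * lam)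

/-- The degenerate rising factorial `⟨x⟩_{n,λ} = x(x+λ)⋯(x+(n-1)λ)`. -/
def drf (lam x : ℝ) (n : ℕ) : ℝ := ∏ i ∈ Finset.range n, (x + i * lam)

/-- The ordinary falling factorial `(x)_n = x(x-1)⋯(x-n+1)`. -/
def ffall (x : ℝ) (n : ℕ) : ℝ := ∏ i ∈ Finset.range n, (x - i)

/-- The ordinary rising factorial `⟨x⟩_n = x(x+1)⋯(x+n-1)`. -/
def frise (x : ℝ) (n : ℕ) : ℝ := ∏ i ∈ Finset.range n, (x + i)

/-- Composition `f ∘ g` of formal power series, valid when `g` has zero constant term. -/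
def pscomp (f g : PowerSeries ℝ) : PowerSeries ℝ :=
  PowerSeries.mk fun n =>
    ∑ k ∈ Finset.range (n + 1), PowerSeries.coeff (R := ℝ) k f * PowerSeries.coeff (R := ℝ) n (g ^ k)

/-- The degenerate moment generating series `F_Y = Σ_{n≥0} E[(Y)_{n,λ}] X^n/n!`. -/
def momSeries (lam : ℝ) {Ω : Type*} [MeasurableSpace Ω] (μ : Measure Ω) (Y : Ω → ℝ) :
    PowerSeries ℝ :=
  PowerSeries.mk fun n => (∫ ω, dff lam (Y ω) n ∂μ) / (n.factorial : ℝ)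

/-- Taylor series at `u = 0` of the degenerate logarithm `log_λ(1+u)`:
`Σ_{n≥1} λ^{n-1} (1)_{n,1/λ} u^n/n!`. -/
def degLogSeries (lam : ℝ) : PowerSeries ℝ :=
  PowerSeries.mk fun n => if n = 0 then 0 else lam ^ (n - 1) * dff (1 / lam) 1 n / (n.factorial : ℝ)

/-- `G_Y`, the degenerate cumulant generating series `log_{-λ}(F_Y)`, i.e. the substitution of
`F_Y - 1` into the Taylor series of `log_{-λ}(1+u)`. -/
def cumSeries (lam : ℝ) {Ω : Type*} [MeasurableSpace Ω] (μ : Measure Ω) (Y : Ω → ℝ) :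
    PowerSeries ℝ :=
  pscomp (degLogSeries (-lam)) (momSeries lam μ Y - 1)

/-- The degenerate cumulants `κ_{n,λ}(Y) := n!·(coefficient of X^n in G_Y)`. -/
def degCumulant (lam : ℝ) {Ω : Type*} [MeasurableSpace Ω] (μ : Measure Ω) (Y : Ω → ℝ)
    (n : ℕ) : ℝ :=
  (n.factorial : ℝ) * PowerSeries.coeff (R := ℝ) n (cumSeries lam μ Y)

/-- The probabilistic degenerate Stirling numbers of the second kind
`{n brace k}_{Y,λ} := n!·(coefficient of X^n in (F_Y - 1)^k/k!)`. -/
def braceY (lam : ℝ) {Ω : Type*} [MeasurableSpace Ω] (μ : Measure Ω) (Y : Ω → ℝ)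
    (n k : ℕ) : ℝ :=
  (n.factorial : ℝ) * PowerSeries.coeff (R := ℝ) n ((momSeries lam μ Y - 1) ^ k) / (k.factorial : ℝ)

/-- The probabilistic degenerate Stirling numbers of the first kind, defined by
`(-1)^{n-k} S_{1,λ}^Y(n,k) := n!·(coefficient of X^n in G_Y^k/k!)`. -/
def S1Y (lam : ℝ) {Ω : Type*} [MeasurableSpace Ω] (μ : Measure Ω) (Y : Ω → ℝ)
    (n k : ℕ) : ℝ :=
  (-1 : ℝ) ^ (n - k) * ((n.factorial : ℝ) * PowerSeries.coeff (R := ℝ) n ((cumSeries lam μ Y) ^ k) / (k.factorial : ℝ))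

/-- Taylor series of `log(1+u)`: `Σ_{n≥1} (-1)^{n-1} u^n/n`. -/
def logSeries : PowerSeries ℝ :=
  PowerSeries.mk fun n => if n = 0 then 0 else (-1 : ℝ) ^ (n - 1) / n

/-- `F^x := exp (x · Log F)` for a power series `F` with constant term `1`. -/
def psPow (F : PowerSeries ℝ) (x : ℝ) : PowerSeries ℝ :=
  pscomp (PowerSeries.exp ℝ) (PowerSeries.C (R := ℝ) x * pscomp logSeries (F - 1))

/-- `F ↦ F/X`, i.e. the shift sending `Σ a_{n+1} X^{n+1}` (with `a_0 = 0`) to `Σ a_{n+1} X^n`. -/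
def shiftDown (F : PowerSeries ℝ) : PowerSeries ℝ :=
  PowerSeries.mk fun n => PowerSeries.coeff (R := ℝ) (n + 1) F

/-- The probabilistic degenerate Bernoulli polynomials associated with `Y`:
`Σ_{n≥0} β_{n,λ}^Y(x) X^n/n! = (X/(F_Y-1))·F_Y^x`. -/
def probBernoulli (lam : ℝ) {Ω : Type*} [MeasurableSpace Ω] (μ : Measure Ω) (Y : Ω → ℝ)
    (n : ℕ) (x : ℝ) : ℝ :=
  (n.factorial : ℝ) *
    PowerSeries.coeff (R := ℝ) n ((shiftDown (momSeries lam μ Y - 1))⁻¹ * psPow (momSeries lam μ Y) x)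

/-- The probabilistic degenerate Euler polynomials associated with `Y`:
`Σ_{n≥0} 𝓔_{n,λ}^Y(x) X^n/n! = (2/(F_Y+1))·F_Y^x`. -/
def probEuler (lam : ℝ) {Ω : Type*} [MeasurableSpace Ω] (μ : Measure Ω) (Y : Ω → ℝ)
    (n : ℕ) (x : ℝ) : ℝ :=
  (n.factorial : ℝ) *
    PowerSeries.coeff (R := ℝ) n
      (PowerSeries.C (R := ℝ) 2 * (momSeries lam μ Y + 1)⁻¹ * psPow (momSeries lam μ Y) x)

open PowerSeries

namespace Work

theorem coeff_pscomp (f g : PowerSeries ℝ) (n : ℕ) :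
    coeff (R := ℝ) n (pscomp f g) =
      ∑ k ∈ Finset.range (n + 1), coeff (R := ℝ) k f * coeff (R := ℝ) n (g ^ k) := by
  simp [pscomp]

theorem coeff_pow_zero {g : PowerSeries ℝ} (hg : constantCoeff (R := ℝ) g = 0) :
    ∀ k n : ℕ, n < k → coeff (R := ℝ) n (g ^ k) = 0 := by
  intro k
  induction k with
  | zero => intro n hn; omega
  | succ m ih =>
    intro n hn
    rw [pow_succ, coeff_mul]
    apply Finset.sum_eq_zero
    rintro ⟨a, b⟩ hab
    have hab := Finset.HasAntidiagonal.mem_antidiagonal.mp hab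
    by_cases ha : a < m
    · rw [ih a ha, zero_mul]
    · have hb : b = 0 := by omega
      subst hb
      rw [← coeff_zero_eq_constantCoeff] at hg
      rw [hg, mul_zero]

/-- Master sum-interchange lemma. -/
theorem coeff_mul_mk (d n : ℕ) (c : ℕ → ℝ) (u : ℕ → PowerSeries ℝ) (V : PowerSeries ℝ)
    (hu : ∀ k j : ℕ, j + d < k → coeff (R := ℝ) j (u k) = 0) :
    coeff (R := ℝ) n (V * PowerSeries.mk fun j => ∑ k ∈ Finset.range (j + d + 1), c k * coeff (R := ℝ) j (u k)) =
      ∑ k ∈ Finset.range (n + d + 1), c k * coeff (R := ℝ) n (V * u k) := by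
  rw [coeff_mul, Finset.Nat.sum_antidiagonal_eq_sum_range_succ_mk]
  have h1 : ∀ a ∈ Finset.range (n + 1),
      coeff (R := ℝ) a V * coeff (R := ℝ) (n - a) (PowerSeries.mk fun j => ∑ k ∈ Finset.range (j + d + 1), c k * coeff (R := ℝ) j (u k)) =
      ∑ k ∈ Finset.range (n + d + 1), c k * (coeff (R := ℝ) a V * coeff (R := ℝ) (n - a) (u k)) := by
    intro a ha
    rw [coeff_mk]
    rw [Finset.mul_sum]
    rw [← Finset.sum_subset (Finset.range_subset_range.2 (by simp at ha; omega) :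
        Finset.range (n - a + d + 1) ⊆ Finset.range (n + d + 1))]
    · apply Finset.sum_congr rfl; intro k _; ring
    · intro k hk hk2
      simp only [Finset.mem_range] at hk hk2
      rw [hu k (n - a) (by omega), mul_zero, mul_zero]
  rw [Finset.sum_congr rfl h1, Finset.sum_comm]
  apply Finset.sum_congr rfl
  intro k _
  rw [coeff_mul, Finset.Nat.sum_antidiagonal_eq_sum_range_succ_mk, Finset.mul_sum]

end Work

namespace Work2
open Work

local notation "dd" => PowerSeries.derivative ℝ

theorem pscomp_one (g : PowerSeries ℝ) : pscomp 1 g = 1 := by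
  ext n
  rw [coeff_pscomp]
  rw [Finset.sum_eq_single 0]
  · simp
  · intro k hk hk0
    rw [PowerSeries.coeff_one, if_neg hk0, zero_mul]
  · simp

/-- `pscomp f g * (1+g) = pscomp ((1+X)*f) g`. -/
theorem pscomp_mul_one_add {g : PowerSeries ℝ} (hg : constantCoeff (R := ℝ) g = 0)
    (f : PowerSeries ℝ) :
    (1 + g) * pscomp f g = pscomp ((1 + X) * f) g := by
  ext n
  have := coeff_mul_mk 0 n (fun k => coeff (R := ℝ) k f) (fun k => g ^ k) (1 + g)
    (fun k j hj => coeff_pow_zero hg k j (by omega))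
  simp only [Nat.add_zero] at this
  rw [show pscomp f g = PowerSeries.mk fun j => ∑ k ∈ Finset.range (j + 0 + 1),
      coeff (R := ℝ) k f * coeff (R := ℝ) j (g ^ k) by ext m; rw [coeff_pscomp]; simp, this]
  rw [coeff_pscomp]
  have hL : ∀ k : ℕ, coeff (R := ℝ) n ((1 + g) * g ^ k) = coeff (R := ℝ) n (g ^ k) + coeff (R := ℝ) n (g ^ (k+1)) := by
    intro k
    rw [add_mul, one_mul, map_add, pow_succ, mul_comm (g^k) g]
  have hR : ∀ k : ℕ, coeff (R := ℝ) k ((1 + X) * f) =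
      coeff (R := ℝ) k f + (if k = 0 then 0 else coeff (R := ℝ) (k-1) f) := by
    intro k
    rw [add_mul, one_mul, map_add]
    congr 1
    cases k with
    | zero => simp
    | succ m => rw [PowerSeries.coeff_succ_X_mul]; simp
  calc ∑ k ∈ Finset.range (n+1), coeff (R := ℝ) k f * coeff (R := ℝ) n ((1 + g) * g ^ k)
      = ∑ k ∈ Finset.range (n+1), (coeff (R := ℝ) k f * coeff (R := ℝ) n (g ^ k)
          + coeff (R := ℝ) k f * coeff (R := ℝ) n (g ^ (k+1))) := by
        apply Finset.sum_congr rfl; intro k _; rw [hL k]; ring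
    _ = ∑ k ∈ Finset.range (n+1), coeff (R := ℝ) k f * coeff (R := ℝ) n (g ^ k)
          + ∑ k ∈ Finset.range (n+1), coeff (R := ℝ) k f * coeff (R := ℝ) n (g ^ (k+1)) :=
        Finset.sum_add_distrib
    _ = ∑ k ∈ Finset.range (n+1), coeff (R := ℝ) k ((1+X) * f) * coeff (R := ℝ) n (g ^ k) := by
        have hRs : ∑ k ∈ Finset.range (n+1), coeff (R := ℝ) k ((1+X) * f) * coeff (R := ℝ) n (g ^ k)
            = ∑ k ∈ Finset.range (n+1), (coeff (R := ℝ) k f * coeff (R := ℝ) n (g ^ k)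
              + (if k = 0 then (0:ℝ) else coeff (R := ℝ) (k-1) f) * coeff (R := ℝ) n (g ^ k)) := by
          apply Finset.sum_congr rfl; intro k _; rw [hR k, add_mul]
        rw [hRs, Finset.sum_add_distrib]
        congr 1
        rw [Finset.sum_range_succ'
          (fun k => (if k = 0 then (0:ℝ) else coeff (R := ℝ) (k-1) f) * coeff (R := ℝ) n (g ^ k))]
        simp only [if_neg (Nat.succ_ne_zero _), Nat.add_sub_cancel, if_pos rfl, zero_mul, add_zero]
        rw [Finset.sum_range_succ, coeff_pow_zero hg (n+1) n (by omega), mul_zero, add_zero]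
        simp

end Work2

namespace Work3
open Work Work2

/-- `coeff n (dg * g^k) * (k+1) = (n+1) * coeff (n+1) (g^(k+1))`. -/
theorem coeff_dg_pow (g : PowerSeries ℝ) (k n : ℕ) :
    coeff (R := ℝ) n (PowerSeries.derivative ℝ g * g ^ k) * (k+1) =
      (n+1) * coeff (R := ℝ) (n+1) (g ^ (k+1)) := by
  have h := Derivation.leibniz_pow (PowerSeries.derivative ℝ) (a := g) (k+1)
  have h2 : PowerSeries.derivative ℝ (g ^ (k+1)) =
      ((k:ℝ)+1) • (g ^ k * PowerSeries.derivative ℝ g) := by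
    rw [h]
    simp only [Nat.add_sub_cancel, smul_eq_mul]
    rw [← Nat.cast_smul_eq_nsmul ℝ]
    push_cast
    ring_nf
  have h3 := congrArg (coeff (R := ℝ) n) h2
  rw [PowerSeries.coeff_derivative, _root_.map_smul, smul_eq_mul] at h3
  rw [mul_comm (PowerSeries.derivative ℝ g) (g ^ k)]
  linarith [h3]

/-- Chain rule for `pscomp`. -/
theorem pscomp_derivative {g : PowerSeries ℝ} (hg : constantCoeff (R := ℝ) g = 0)
    (f : PowerSeries ℝ) :
    PowerSeries.derivative ℝ (pscomp f g) =
      pscomp (PowerSeries.derivative ℝ f) g * PowerSeries.derivative ℝ g := by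
  ext n
  rw [PowerSeries.coeff_derivative, coeff_pscomp]
  rw [mul_comm (pscomp (PowerSeries.derivative ℝ f) g) (PowerSeries.derivative ℝ g)]
  have := coeff_mul_mk 0 n (fun k => coeff (R := ℝ) k (PowerSeries.derivative ℝ f))
    (fun k => g ^ k) (PowerSeries.derivative ℝ g)
    (fun k j hj => coeff_pow_zero hg k j (by omega))
  simp only [Nat.add_zero] at this
  rw [show pscomp (PowerSeries.derivative ℝ f) g = PowerSeries.mk fun j =>
      ∑ k ∈ Finset.range (j + 0 + 1), coeff (R := ℝ) k (PowerSeries.derivative ℝ f) * coeff (R := ℝ) j (g ^ k) by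
    ext m; rw [coeff_pscomp]; simp, this]
  have hterm : ∀ k : ℕ, coeff (R := ℝ) k (PowerSeries.derivative ℝ f) *
      coeff (R := ℝ) n (PowerSeries.derivative ℝ g * g ^ k) =
      coeff (R := ℝ) (k+1) f * (coeff (R := ℝ) (n+1) (g ^ (k+1)) * (n+1)) := by
    intro k
    rw [PowerSeries.coeff_derivative]
    have hd := coeff_dg_pow g k n
    have hk1 : ((k:ℝ)+1) ≠ 0 := by positivity
    have : coeff (R := ℝ) n (PowerSeries.derivative ℝ g * g ^ k) =
        (n+1) * coeff (R := ℝ) (n+1) (g ^ (k+1)) / ((k:ℝ)+1) := by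
      field_simp
      linarith [hd]
    rw [this]
    field_simp
  rw [Finset.sum_congr rfl (fun k _ => hterm k)]
  rw [Finset.sum_range_succ' (fun k => coeff (R := ℝ) k f * coeff (R := ℝ) (n+1) (g ^ k))]
  rw [show coeff (R := ℝ) (n+1) (g ^ 0) = 0 by
    rw [pow_zero, PowerSeries.coeff_one, if_neg (Nat.succ_ne_zero n)]]
  rw [mul_zero, add_zero, Finset.sum_mul]
  apply Finset.sum_congr rfl
  intro k _
  ring

end Work3

namespace Work4
open Work Work2 Work3

/-- Uniqueness for the ODE `F·P' = Q·P` with given initial coefficient. -/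
theorem ode_unique {F Q P R : PowerSeries ℝ} (hF : constantCoeff (R := ℝ) F = 1)
    (hP : F * PowerSeries.derivative ℝ P = Q * P)
    (hR : F * PowerSeries.derivative ℝ R = Q * R)
    (h0 : coeff (R := ℝ) 0 P = coeff (R := ℝ) 0 R) : P = R := by
  have hS : F * PowerSeries.derivative ℝ (P - R) = Q * (P - R) := by
    rw [map_sub, mul_sub, mul_sub, hP, hR]
  set S := P - R with hSdef
  have key : ∀ n, coeff (R := ℝ) n S = 0 := by
    intro n
    induction n using Nat.strong_induction_on with
    | _ n ih =>
      cases n with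
      | zero => rw [hSdef, map_sub, h0, sub_self]
      | succ m =>
        have hco := congrArg (coeff (R := ℝ) m) hS
        rw [coeff_mul, coeff_mul, Finset.Nat.sum_antidiagonal_eq_sum_range_succ_mk,
          Finset.Nat.sum_antidiagonal_eq_sum_range_succ_mk] at hco
        have hQ : ∑ a ∈ Finset.range (m+1), coeff (R := ℝ) a Q * coeff (R := ℝ) (m - a) S = 0 := by
          apply Finset.sum_eq_zero
          intro a _
          rw [ih (m - a) (by omega), mul_zero]
        rw [hQ] at hco
        rw [Finset.sum_eq_single 0] at hco
        · rw [coeff_zero_eq_constantCoeff, hF, Nat.sub_zero, one_mul,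
            PowerSeries.coeff_derivative] at hco
          have : ((m:ℝ)+1) ≠ 0 := by positivity
          have := mul_eq_zero.1 hco
          tauto
        · intro a ha ha0
          simp only [Finset.mem_range] at ha
          rw [PowerSeries.coeff_derivative, ih (m - a + 1) (by omega), zero_mul, mul_zero]
        · simp
  ext n
  have := key n
  rw [hSdef, map_sub, sub_eq_zero] at this
  rw [this]

/-- Derivative of a `mk`-sum series. -/
theorem deriv_mk_sum (c : ℕ → ℝ) (u : ℕ → PowerSeries ℝ) :
    PowerSeries.derivative ℝ (PowerSeries.mk fun j => ∑ k ∈ Finset.range (j + 1), c k * coeff (R := ℝ) j (u k)) =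
      PowerSeries.mk fun j => ∑ k ∈ Finset.range (j + 1 + 1), c k * coeff (R := ℝ) j (PowerSeries.derivative ℝ (u k)) := by
  ext j
  rw [PowerSeries.coeff_derivative, coeff_mk, coeff_mk, Finset.sum_mul]
  apply Finset.sum_congr rfl
  intro k _
  rw [PowerSeries.coeff_derivative]
  ring

/-- The ODE satisfied by `Σ_k c_k B^k` when `(k+1)c_{k+1} = (y-k)c_k`. -/
theorem mk_sum_ode (B : PowerSeries ℝ) (hB : constantCoeff (R := ℝ) B = 0) (y : ℝ)
    (c : ℕ → ℝ) (hc : ∀ k : ℕ, ((k:ℝ)+1) * c (k+1) = (y - k) * c k) :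
    (1 + B) * PowerSeries.derivative ℝ
        (PowerSeries.mk fun j => ∑ k ∈ Finset.range (j + 1), c k * coeff (R := ℝ) j (B ^ k)) =
      PowerSeries.C (R := ℝ) y * PowerSeries.derivative ℝ B *
        (PowerSeries.mk fun j => ∑ k ∈ Finset.range (j + 1), c k * coeff (R := ℝ) j (B ^ k)) := by
  ext n
  set t : ℕ → ℝ := fun k => coeff (R := ℝ) (n+1) (B ^ k) with ht
  -- LHS
  rw [deriv_mk_sum c (fun k => B ^ k)]
  have hLHS := coeff_mul_mk 1 n c (fun k => PowerSeries.derivative ℝ (B ^ k)) (1 + B)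
    (fun k j hj => by
      rw [PowerSeries.coeff_derivative, coeff_pow_zero hB k (j+1) (by omega), zero_mul])
  rw [hLHS]
  -- RHS
  rw [mul_assoc, PowerSeries.coeff_C_mul]
  have hRHS := coeff_mul_mk 0 n c (fun k => B ^ k) (PowerSeries.derivative ℝ B)
    (fun k j hj => coeff_pow_zero hB k j (by omega))
  simp only [Nat.add_zero] at hRHS
  rw [hRHS]
  -- per-term facts
  have f2 : ∀ k : ℕ, coeff (R := ℝ) n (PowerSeries.derivative ℝ B * B ^ k) = (n+1) * t (k+1) / ((k:ℝ)+1) := by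
    intro k
    have := coeff_dg_pow B k n
    have hk : ((k:ℝ)+1) ≠ 0 := by positivity
    field_simp
    linarith [this]
  have f3 : ∀ k : ℕ, coeff (R := ℝ) n (B * PowerSeries.derivative ℝ (B ^ k)) =
      (k:ℝ) * ((n+1) * t (k+1) / ((k:ℝ)+1)) := by
    intro k
    cases k with
    | zero =>
      simp only [pow_zero, Nat.cast_zero, zero_mul]
      rw [show PowerSeries.derivative ℝ (1 : PowerSeries ℝ) = 0 by
        simpa using (PowerSeries.derivative ℝ).map_one_eq_zero]
      rw [mul_zero, map_zero]
    | succ m =>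
      have hd : PowerSeries.derivative ℝ (B ^ (m+1)) = ((m:ℝ)+1) • (B ^ m * PowerSeries.derivative ℝ B) := by
        rw [Derivation.leibniz_pow]
        simp only [Nat.add_sub_cancel, smul_eq_mul]
        rw [← Nat.cast_smul_eq_nsmul ℝ]
        push_cast
        ring_nf
      have hBd : B * PowerSeries.derivative ℝ (B ^ (m+1)) =
          ((m:ℝ)+1) • (PowerSeries.derivative ℝ B * B ^ (m+1)) := by
        rw [hd, PowerSeries.smul_eq_C_mul, PowerSeries.smul_eq_C_mul, pow_succ]
        ring
      rw [hBd, _root_.map_smul, smul_eq_mul, f2 (m+1)]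
      push_cast
      ring
  have fL : ∀ k : ℕ, coeff (R := ℝ) n ((1 + B) * PowerSeries.derivative ℝ (B ^ k)) =
      t k * ((n:ℝ)+1) + (k:ℝ) * ((n+1) * t (k+1) / ((k:ℝ)+1)) := by
    intro k
    rw [add_mul, one_mul, map_add, f3 k, PowerSeries.coeff_derivative]
  have ht0 : t 0 = 0 := by
    rw [ht]; simp [PowerSeries.coeff_one, Nat.succ_ne_zero]
  have htop : t (n+2) = 0 := coeff_pow_zero hB (n+2) (n+1) (by omega)
  calc ∑ k ∈ Finset.range (n + 1 + 1), c k * coeff (R := ℝ) n ((1 + B) * PowerSeries.derivative ℝ (B ^ k))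
      = ∑ k ∈ Finset.range (n + 1 + 1), (c k * (t k * ((n:ℝ)+1))
          + c k * ((k:ℝ) * ((n+1) * t (k+1) / ((k:ℝ)+1)))) := by
        apply Finset.sum_congr rfl; intro k _; rw [fL k]; ring
    _ = ∑ k ∈ Finset.range (n + 1 + 1), c k * (t k * ((n:ℝ)+1))
          + ∑ k ∈ Finset.range (n + 1 + 1), c k * ((k:ℝ) * ((n+1) * t (k+1) / ((k:ℝ)+1))) :=
        Finset.sum_add_distrib
    _ = ∑ k ∈ Finset.range (n + 1), c (k+1) * (t (k+1) * ((n:ℝ)+1))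
          + ∑ k ∈ Finset.range (n + 1), c k * ((k:ℝ) * ((n+1) * t (k+1) / ((k:ℝ)+1))) := by
        congr 1
        · rw [Finset.sum_range_succ' (fun k => c k * (t k * ((n:ℝ)+1))), ht0]
          simp
        · rw [Finset.sum_range_succ, htop]
          simp
    _ = ∑ k ∈ Finset.range (n + 1), c k * ((y:ℝ) * ((n+1) * t (k+1) / ((k:ℝ)+1))) := by
        rw [← Finset.sum_add_distrib]
        apply Finset.sum_congr rfl
        intro k _
        have hk : ((k:ℝ)+1) ≠ 0 := by positivity
        have hck : c (k+1) = (y - k) * c k / ((k:ℝ)+1) := by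
          field_simp
          linarith [hc k]
        rw [hck]
        field_simp
        ring
    _ = ∑ k ∈ Finset.range (n + 1), y * (c k * coeff (R := ℝ) n (PowerSeries.derivative ℝ B * B ^ k)) := by
        apply Finset.sum_congr rfl
        intro k _
        rw [f2 k]
        ring
    _ = y * ∑ k ∈ Finset.range (n + 1), c k * coeff (R := ℝ) n (PowerSeries.derivative ℝ B * B ^ k) := by
        rw [Finset.mul_sum]

end Work4


namespace Work5
open Work Work2 Work3 Work4

theorem coeff_zero_pscomp (f g : PowerSeries ℝ) : coeff (R := ℝ) 0 (pscomp f g) = coeff (R := ℝ) 0 f := by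
  rw [coeff_pscomp]
  simp

theorem deriv_exp : PowerSeries.derivative ℝ (PowerSeries.exp ℝ) = PowerSeries.exp ℝ := by
  ext n
  rw [PowerSeries.coeff_derivative, PowerSeries.coeff_exp, PowerSeries.coeff_exp]
  have h1 : (n.factorial : ℝ) ≠ 0 := by exact_mod_cast Nat.factorial_ne_zero n
  have h2 : ((n:ℝ)+1) ≠ 0 := by positivity
  simp only [Nat.factorial_succ, map_div₀, map_one, map_natCast]
  push_cast
  field_simp

theorem ffall_succ (x : ℝ) (k : ℕ) : ffall x (k+1) = ffall x k * (x - k) :=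
  Finset.prod_range_succ _ _

theorem ffall_zero (x : ℝ) : ffall x 0 = 1 := rfl

/-- Binomial expansion: `exp(y·M) = Σ_k C(y,k) (exp(M)-1)^k` for `M` with zero constant term. -/
theorem binexp {M : PowerSeries ℝ} (hM : constantCoeff (R := ℝ) M = 0) (y : ℝ) :
    pscomp (PowerSeries.exp ℝ) (PowerSeries.C (R := ℝ) y * M) =
      PowerSeries.mk fun j => ∑ k ∈ Finset.range (j + 1),
        (ffall y k / k.factorial) * coeff (R := ℝ) j ((pscomp (PowerSeries.exp ℝ) M - 1) ^ k) := by
  set E := pscomp (PowerSeries.exp ℝ) M with hE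
  set B := E - 1 with hBdef
  have hE0 : coeff (R := ℝ) 0 E = 1 := by
    rw [hE, coeff_zero_pscomp, PowerSeries.coeff_exp]
    simp
  have hB0 : constantCoeff (R := ℝ) B = 0 := by
    rw [← coeff_zero_eq_constantCoeff, hBdef, map_sub, hE0]
    simp
  have hCM : constantCoeff (R := ℝ) (PowerSeries.C (R := ℝ) y * M) = 0 := by
    rw [map_mul, hM, mul_zero]
  have hdE : PowerSeries.derivative ℝ E = E * PowerSeries.derivative ℝ M := by
    rw [hE, pscomp_derivative hM, deriv_exp]
  have hdB : PowerSeries.derivative ℝ B = E * PowerSeries.derivative ℝ M := by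
    rw [hBdef, map_sub, (PowerSeries.derivative ℝ).map_one_eq_zero, sub_zero, hdE]
  have hdCM : PowerSeries.derivative ℝ (PowerSeries.C (R := ℝ) y * M) =
      PowerSeries.C (R := ℝ) y * PowerSeries.derivative ℝ M := by
    rw [← PowerSeries.smul_eq_C_mul, ← PowerSeries.smul_eq_C_mul, Derivation.map_smul]
  set P₁ := pscomp (PowerSeries.exp ℝ) (PowerSeries.C (R := ℝ) y * M) with hP₁
  set c : ℕ → ℝ := fun k => ffall y k / k.factorial with hcdef
  set P₂ := PowerSeries.mk fun j => ∑ k ∈ Finset.range (j + 1), c k * coeff (R := ℝ) j (B ^ k) with hP₂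
  have hdP₁ : PowerSeries.derivative ℝ P₁ = P₁ * (PowerSeries.C (R := ℝ) y * PowerSeries.derivative ℝ M) := by
    rw [hP₁, pscomp_derivative hCM, deriv_exp, hdCM, ← hP₁]
  have hc : ∀ k : ℕ, ((k:ℝ)+1) * c (k+1) = (y - k) * c k := by
    intro k
    rw [hcdef]
    simp only []
    rw [ffall_succ, Nat.factorial_succ]
    have h1 : (k.factorial : ℝ) ≠ 0 := by exact_mod_cast Nat.factorial_ne_zero k
    have h2 : ((k:ℝ)+1) ≠ 0 := by positivity
    push_cast
    field_simp
  have hode₂ := mk_sum_ode B hB0 y c hc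
  have hEB : (1 : PowerSeries ℝ) + B = E := by rw [hBdef]; ring
  have key : P₁ = P₂ := by
    apply ode_unique (F := E) (Q := PowerSeries.C (R := ℝ) y * PowerSeries.derivative ℝ B)
      (by rw [← coeff_zero_eq_constantCoeff]; exact hE0)
    · rw [hdP₁, hdB]
      ring
    · rw [← hP₂] at hode₂
      rw [← hEB, hode₂]
    · rw [hP₁, coeff_zero_pscomp, PowerSeries.coeff_exp, hP₂, coeff_mk]
      simp [hcdef, ffall_zero]
  rw [key, hP₂, hBdef, hE]

end Work5


namespace Work6
open Work Work2 Work3 Work4 Work5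

theorem pscomp_sub (f g h : PowerSeries ℝ) :
    pscomp (f - g) h = pscomp f h - pscomp g h := by
  ext n
  rw [map_sub, coeff_pscomp, coeff_pscomp, coeff_pscomp, ← Finset.sum_sub_distrib]
  apply Finset.sum_congr rfl
  intro k _
  rw [map_sub]
  ring

theorem pscomp_C_mul (a : ℝ) (f h : PowerSeries ℝ) :
    pscomp (PowerSeries.C (R := ℝ) a * f) h = PowerSeries.C (R := ℝ) a * pscomp f h := by
  ext n
  rw [PowerSeries.coeff_C_mul, coeff_pscomp, coeff_pscomp, Finset.mul_sum]
  apply Finset.sum_congr rfl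
  intro k _
  rw [PowerSeries.coeff_C_mul]
  ring

theorem one_add_X_mul_dlog : (1 + PowerSeries.X) * PowerSeries.derivative ℝ logSeries = 1 := by
  have hc : ∀ k : ℕ, coeff (R := ℝ) k (PowerSeries.derivative ℝ logSeries) = (-1)^k := by
    intro k
    rw [PowerSeries.coeff_derivative, logSeries, coeff_mk, if_neg (Nat.succ_ne_zero k),
      Nat.add_sub_cancel]
    have : ((k:ℝ)+1) ≠ 0 := by positivity
    push_cast
    field_simp
  ext n
  rw [add_mul, one_mul, map_add]
  cases n with
  | zero =>
    rw [PowerSeries.coeff_zero_X_mul, hc 0]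
    simp
  | succ m =>
    rw [PowerSeries.coeff_succ_X_mul, hc (m+1), hc m, PowerSeries.coeff_one,
      if_neg (Nat.succ_ne_zero m), pow_succ]
    ring

theorem constantCoeff_logSeries : constantCoeff (R := ℝ) logSeries = 0 := by
  rw [← coeff_zero_eq_constantCoeff, logSeries, coeff_mk]
  simp

theorem constantCoeff_pscomp_log (A : PowerSeries ℝ) :
    constantCoeff (R := ℝ) (pscomp logSeries A) = 0 := by
  rw [← coeff_zero_eq_constantCoeff, coeff_zero_pscomp, ← constantCoeff_logSeries,
    coeff_zero_eq_constantCoeff]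

/-- `(1+A)·L' = A'` where `L = log(1+A)`. -/
theorem log_ode {A : PowerSeries ℝ} (hA : constantCoeff (R := ℝ) A = 0) :
    (1 + A) * PowerSeries.derivative ℝ (pscomp logSeries A) = PowerSeries.derivative ℝ A := by
  rw [pscomp_derivative hA, ← mul_assoc, pscomp_mul_one_add hA, one_add_X_mul_dlog,
    pscomp_one, one_mul]

/-- coefficient of `degLogSeries (-lam)`. -/
theorem coeff_degLog {lam : ℝ} (hlam : lam ≠ 0) (m : ℕ) :
    coeff (R := ℝ) (m+1) (degLogSeries (-lam)) =
      ffall (-lam) (m+1) / ((-lam) * ((m+1).factorial : ℝ)) := by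
  rw [degLogSeries, coeff_mk, if_neg (Nat.succ_ne_zero m), Nat.add_sub_cancel]
  have key : (-lam)^(m+1) * dff (1/(-lam)) 1 (m+1) = ffall (-lam) (m+1) := by
    have hpow : ((-lam))^(m+1) = ∏ _i ∈ Finset.range (m+1), (-lam) := by
      rw [Finset.prod_const, Finset.card_range]
    rw [dff, ffall, hpow, ← Finset.prod_mul_distrib]
    apply Finset.prod_congr rfl
    intro i _
    rw [one_div, mul_sub, mul_one,
      show (-lam) * ((i:ℝ) * (-lam)⁻¹) = (i:ℝ) * ((-lam) * (-lam)⁻¹) by ring,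
      mul_inv_cancel₀ (neg_ne_zero.2 hlam), mul_one]
  have hml : (-lam) ≠ 0 := neg_ne_zero.2 hlam
  have : (-lam)^(m)*dff (1/(-lam)) 1 (m+1) = ffall (-lam) (m+1) / (-lam) := by
    rw [eq_div_iff hml]
    rw [← key, pow_succ]
    ring
  rw [this]
  ring

theorem constantCoeff_degLog (lam : ℝ) : coeff (R := ℝ) 0 (degLogSeries lam) = 0 := by
  rw [degLogSeries, coeff_mk]
  simp

/-- `(1+X)·D' = 1 - λ·D` for `D = degLogSeries (-λ)`. -/
theorem deg_log_ode {lam : ℝ} (hlam : lam ≠ 0) :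
    (1 + PowerSeries.X) * PowerSeries.derivative ℝ (degLogSeries (-lam)) =
      1 - PowerSeries.C (R := ℝ) lam * degLogSeries (-lam) := by
  have hml : (-lam) ≠ 0 := neg_ne_zero.2 hlam
  ext n
  rw [add_mul, one_mul, map_add, map_sub, PowerSeries.coeff_C_mul]
  cases n with
  | zero =>
    rw [PowerSeries.coeff_zero_X_mul, PowerSeries.coeff_derivative, coeff_degLog hlam 0]
    rw [show coeff (R := ℝ) 0 (degLogSeries (-lam)) = 0 from constantCoeff_degLog (-lam)]
    rw [ffall_succ, ffall_zero]
    simp only [PowerSeries.coeff_one]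
    field_simp
    simp
  | succ m =>
    rw [PowerSeries.coeff_succ_X_mul, PowerSeries.coeff_derivative, PowerSeries.coeff_derivative,
      coeff_degLog hlam (m+1), coeff_degLog hlam m, PowerSeries.coeff_one,
      if_neg (Nat.succ_ne_zero m)]
    rw [show ffall (-lam) (m+1+1) = ffall (-lam) (m+1) * ((-lam) - ((m:ℝ)+1)) by
      rw [ffall_succ]; push_cast; ring]
    have hf1 : ((m+1).factorial : ℝ) ≠ 0 := by exact_mod_cast Nat.factorial_ne_zero (m+1)
    have hf2 : ((m+1+1).factorial : ℝ) ≠ 0 := by exact_mod_cast Nat.factorial_ne_zero (m+2)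
    rw [show ((m+1+1).factorial : ℝ) = ((m+2) : ℝ) * ((m+1).factorial : ℝ) by
      rw [Nat.factorial_succ]; push_cast; ring]
    field_simp
    push_cast
    ring

end Work6

namespace Work7
open Work Work2 Work3 Work4 Work5 Work6

/-- `exp(-λ·log(1+A)) = 1 - λ·ℓ_{-λ}(A)`. -/
theorem exp_neg_lam_log {lam : ℝ} (hlam : lam ≠ 0) {A : PowerSeries ℝ}
    (hA : constantCoeff (R := ℝ) A = 0) :
    pscomp (PowerSeries.exp ℝ) (PowerSeries.C (R := ℝ) (-lam) * pscomp logSeries A) =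
      1 + PowerSeries.C (R := ℝ) (-lam) * pscomp (degLogSeries (-lam)) A := by
  set L := pscomp logSeries A with hLdef
  have hL0 : constantCoeff (R := ℝ) L = 0 := constantCoeff_pscomp_log A
  have hCM : constantCoeff (R := ℝ) (PowerSeries.C (R := ℝ) (-lam) * L) = 0 := by
    rw [map_mul, hL0, mul_zero]
  have hF0 : constantCoeff (R := ℝ) (1 + A) = 1 := by rw [map_add, map_one, hA, add_zero]
  have hdCM : PowerSeries.derivative ℝ (PowerSeries.C (R := ℝ) (-lam) * L) =
      PowerSeries.C (R := ℝ) (-lam) * PowerSeries.derivative ℝ L := by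
    rw [← PowerSeries.smul_eq_C_mul, ← PowerSeries.smul_eq_C_mul, Derivation.map_smul]
  have hdA : PowerSeries.derivative ℝ (1 + A) = PowerSeries.derivative ℝ A := by
    rw [map_add, (PowerSeries.derivative ℝ).map_one_eq_zero, zero_add]
  apply ode_unique (F := 1 + A) (Q := PowerSeries.C (R := ℝ) (-lam) * PowerSeries.derivative ℝ A) hF0
  · rw [pscomp_derivative hCM, Work5.deriv_exp, hdCM]
    have : (1 + A) * (pscomp (PowerSeries.exp ℝ) (PowerSeries.C (R := ℝ) (-lam) * L) *
        (PowerSeries.C (R := ℝ) (-lam) * PowerSeries.derivative ℝ L)) =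
        PowerSeries.C (R := ℝ) (-lam) * ((1 + A) * PowerSeries.derivative ℝ L) *
          pscomp (PowerSeries.exp ℝ) (PowerSeries.C (R := ℝ) (-lam) * L) := by ring
    rw [this, log_ode hA]
  · have hdR : PowerSeries.derivative ℝ (1 + PowerSeries.C (R := ℝ) (-lam) * pscomp (degLogSeries (-lam)) A)
        = PowerSeries.C (R := ℝ) (-lam) * PowerSeries.derivative ℝ (pscomp (degLogSeries (-lam)) A) := by
      rw [map_add, (PowerSeries.derivative ℝ).map_one_eq_zero, zero_add,
        ← PowerSeries.smul_eq_C_mul (a := -lam), Derivation.map_smul, PowerSeries.smul_eq_C_mul]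
    rw [hdR, pscomp_derivative hA]
    have step : (1 + A) * (PowerSeries.C (R := ℝ) (-lam) *
        (pscomp (PowerSeries.derivative ℝ (degLogSeries (-lam))) A * PowerSeries.derivative ℝ A)) =
        PowerSeries.C (R := ℝ) (-lam) * ((1 + A) * pscomp (PowerSeries.derivative ℝ (degLogSeries (-lam))) A)
          * PowerSeries.derivative ℝ A := by ring
    rw [step, pscomp_mul_one_add hA, deg_log_ode hlam, pscomp_sub, pscomp_one, pscomp_C_mul]
    rw [map_neg]
    ring
  · rw [coeff_zero_pscomp, PowerSeries.coeff_exp, map_add, PowerSeries.coeff_C_mul,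
      coeff_zero_pscomp, constantCoeff_degLog]
    simp

theorem drf_eq {lam : ℝ} (hlam : lam ≠ 0) (x : ℝ) (k : ℕ) :
    drf lam x k = ffall (-(x/lam)) k * (-lam)^k := by
  rw [drf, ffall]
  have hpow : ((-lam))^k = ∏ _i ∈ Finset.range k, (-lam) := by
    rw [Finset.prod_const, Finset.card_range]
  rw [hpow, ← Finset.prod_mul_distrib]
  apply Finset.prod_congr rfl
  intro i _
  have : (-(x/lam) - i) * (-lam) = x * (lam * lam⁻¹) + i * lam := by
    rw [div_eq_mul_inv]
    ring
  rw [this, mul_inv_cancel₀ hlam, mul_one]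

/-- KEY: coefficients of `F^x` in terms of powers of `G`. -/
theorem key {lam : ℝ} (hlam : lam ≠ 0) {A : PowerSeries ℝ} (hA : constantCoeff (R := ℝ) A = 0)
    (x : ℝ) (j : ℕ) :
    coeff (R := ℝ) j (pscomp (PowerSeries.exp ℝ) (PowerSeries.C (R := ℝ) x * pscomp logSeries A)) =
      ∑ k ∈ Finset.range (j + 1), drf lam x k / (k.factorial : ℝ) *
        coeff (R := ℝ) j ((pscomp (degLogSeries (-lam)) A) ^ k) := by
  set L := pscomp logSeries A with hLdef
  set G := pscomp (degLogSeries (-lam)) A with hGdef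
  have hL0 : constantCoeff (R := ℝ) L = 0 := constantCoeff_pscomp_log A
  set M := PowerSeries.C (R := ℝ) (-lam) * L with hMdef
  have hM0 : constantCoeff (R := ℝ) M = 0 := by rw [hMdef, map_mul, hL0, mul_zero]
  set y := -(x/lam) with hydef
  have hyx : PowerSeries.C (R := ℝ) y * M = PowerSeries.C (R := ℝ) x * L := by
    rw [hMdef, ← mul_assoc, ← map_mul]
    congr 2
    rw [hydef, div_eq_mul_inv]
    rw [show -(x * lam⁻¹) * -lam = x * (lam * lam⁻¹) by ring, mul_inv_cancel₀ hlam, mul_one]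
  have hbin := binexp hM0 y
  rw [hyx] at hbin
  rw [hbin, coeff_mk]
  have hEB : pscomp (PowerSeries.exp ℝ) M - 1 = PowerSeries.C (R := ℝ) (-lam) * G := by
    rw [hMdef, exp_neg_lam_log hlam hA, hGdef]
    ring
  apply Finset.sum_congr rfl
  intro k _
  rw [hEB, mul_pow, ← map_pow, PowerSeries.coeff_C_mul, drf_eq hlam x k, ← hydef]
  ring

end Work7


theorem probEuler_eq_sum_S1Y {Ω : Type*} [MeasurableSpace Ω] (μ : MeasureTheory.Measure Ω)
    [MeasureTheory.IsProbabilityMeasure μ] (Y : Ω → ℝ) (hY : Measurable Y)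
    (hmom : ∀ n : ℕ, MeasureTheory.Integrable (fun ω => |Y ω| ^ n) μ)
    (lam : ℝ) (hlam : lam ≠ 0)
    (x : ℝ) (n : ℕ) :
    probEuler lam μ Y n x =
      ∑ j ∈ Finset.range (n + 1), ∑ k ∈ Finset.range (j + 1),
        (n.choose j : ℝ) * probEuler lam μ Y (n - j) 0 * drf lam x k *
          (-1 : ℝ) ^ (j - k) * S1Y lam μ Y j k := by
  classical
  have hF1 : PowerSeries.constantCoeff (R := ℝ) (momSeries lam μ Y) = 1 := by
    rw [← PowerSeries.coeff_zero_eq_constantCoeff, momSeries, PowerSeries.coeff_mk]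
    have hdff : (fun ω => dff lam (Y ω) 0) = fun _ => (1:ℝ) := by
      funext ω; simp [dff]
    rw [hdff]
    simp
  have hA : PowerSeries.constantCoeff (R := ℝ) (momSeries lam μ Y - 1) = 0 := by
    rw [map_sub, hF1, map_one, sub_self]
  -- `F^0 = 1`
  have hpow0 : psPow (momSeries lam μ Y) 0 = 1 := by
    rw [psPow, map_zero, zero_mul]
    ext m
    rw [Work.coeff_pscomp]
    rw [Finset.sum_eq_single 0]
    · simp
    · intro k hk hk0
      cases k with
      | zero => exact absurd rfl hk0
      | succ i =>
        rw [zero_pow (Nat.succ_ne_zero i), map_zero, mul_zero]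
    · simp
  have hE0 : ∀ m : ℕ, probEuler lam μ Y m 0 = (m.factorial : ℝ) *
      PowerSeries.coeff (R := ℝ) m (PowerSeries.C (R := ℝ) 2 * (momSeries lam μ Y + 1)⁻¹) := by
    intro m
    rw [probEuler, hpow0, mul_one]
  -- the inner sum over k
  have inner : ∀ j : ℕ,
      ∑ k ∈ Finset.range (j+1), drf lam x k * ((-1 : ℝ) ^ (j - k) * S1Y lam μ Y j k) =
        (j.factorial : ℝ) * PowerSeries.coeff (R := ℝ) j (psPow (momSeries lam μ Y) x) := by
    intro j
    have hkey := Work7.key hlam hA x j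
    rw [show psPow (momSeries lam μ Y) x = pscomp (PowerSeries.exp ℝ)
        (PowerSeries.C (R := ℝ) x * pscomp logSeries (momSeries lam μ Y - 1)) from rfl,
      hkey, Finset.mul_sum]
    apply Finset.sum_congr rfl
    intro k _
    have hsq : ((-1 : ℝ)) ^ (j - k) * ((-1 : ℝ)) ^ (j - k) = 1 := by
      rw [← pow_add]
      exact Even.neg_one_pow ⟨j - k, rfl⟩
    rw [S1Y, show cumSeries lam μ Y = pscomp (degLogSeries (-lam)) (momSeries lam μ Y - 1) from rfl]
    calc drf lam x k * ((-1:ℝ) ^ (j-k) * ((-1:ℝ) ^ (j-k) * ((j.factorial : ℝ) *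
            PowerSeries.coeff (R := ℝ) j (pscomp (degLogSeries (-lam)) (momSeries lam μ Y - 1) ^ k) / (k.factorial : ℝ))))
        = ((-1:ℝ) ^ (j-k) * (-1:ℝ) ^ (j-k)) * (drf lam x k * ((j.factorial : ℝ) *
            PowerSeries.coeff (R := ℝ) j (pscomp (degLogSeries (-lam)) (momSeries lam μ Y - 1) ^ k) / (k.factorial : ℝ))) := by
          ring
      _ = (j.factorial : ℝ) * (drf lam x k / (k.factorial : ℝ) *
            PowerSeries.coeff (R := ℝ) j (pscomp (degLogSeries (-lam)) (momSeries lam μ Y - 1) ^ k)) := by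
          rw [hsq]; ring
  -- rewrite the RHS
  have hRHS : ∀ j ∈ Finset.range (n+1),
      ∑ k ∈ Finset.range (j + 1),
        (n.choose j : ℝ) * probEuler lam μ Y (n - j) 0 * drf lam x k *
          (-1 : ℝ) ^ (j - k) * S1Y lam μ Y j k =
      (n.factorial : ℝ) * (PowerSeries.coeff (R := ℝ) (n-j) (PowerSeries.C (R := ℝ) 2 * (momSeries lam μ Y + 1)⁻¹) *
        PowerSeries.coeff (R := ℝ) j (psPow (momSeries lam μ Y) x)) := by
    intro j hj
    simp only [Finset.mem_range] at hj
    have hfact : (n.choose j : ℝ) * ((n-j).factorial : ℝ) * (j.factorial : ℝ) = (n.factorial : ℝ) := by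
      have := Nat.choose_mul_factorial_mul_factorial (Nat.lt_succ_iff.mp hj)
      push_cast [← this]
      ring
    calc ∑ k ∈ Finset.range (j + 1),
        (n.choose j : ℝ) * probEuler lam μ Y (n - j) 0 * drf lam x k *
          (-1 : ℝ) ^ (j - k) * S1Y lam μ Y j k
        = (n.choose j : ℝ) * probEuler lam μ Y (n - j) 0 *
            ∑ k ∈ Finset.range (j + 1), drf lam x k * ((-1 : ℝ) ^ (j - k) * S1Y lam μ Y j k) := by
          rw [Finset.mul_sum]
          apply Finset.sum_congr rfl
          intro k _
          ring
      _ = (n.choose j : ℝ) * probEuler lam μ Y (n - j) 0 *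
            ((j.factorial : ℝ) * PowerSeries.coeff (R := ℝ) j (psPow (momSeries lam μ Y) x)) := by
          rw [inner j]
      _ = (n.factorial : ℝ) * (PowerSeries.coeff (R := ℝ) (n-j) (PowerSeries.C (R := ℝ) 2 * (momSeries lam μ Y + 1)⁻¹) *
            PowerSeries.coeff (R := ℝ) j (psPow (momSeries lam μ Y) x)) := by
          rw [hE0 (n-j), ← hfact]
          ring
  rw [Finset.sum_congr rfl hRHS, ← Finset.mul_sum]
  rw [probEuler, PowerSeries.coeff_mul, Finset.Nat.sum_antidiagonal_eq_sum_range_succ_mk]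
  congr 1
  rw [← Finset.sum_range_reflect (fun j => PowerSeries.coeff (R := ℝ) (n-j) (PowerSeries.C (R := ℝ) 2 * (momSeries lam μ Y + 1)⁻¹) *
    PowerSeries.coeff (R := ℝ) j (psPow (momSeries lam μ Y) x)) (n+1)]
  apply Finset.sum_congr rfl
  intro j hj
  simp only [Finset.mem_range] at hj
  rw [Nat.add_sub_cancel, show n - (n - j) = j by omega]

end
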